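/- Let 𝒯 : [0,1] → ℝ^d be differentiable and evolve under the guided flow 𝒯'(t) = v(t, 𝒯(t)) + u(t) for a velocity field v : [0,1] × ℝ^d → ℝ^d and a guidance input u : [0,1] → ℝ^d. Let g_1, …, g_{N_g}, h_1, …, h_{N_h} : ℝ^d → ℝ be differentiable, set g := Σ_{i=1}^{N_g} g_i², and let ḡ, h̄_1, …, h̄_{N_h} : [0,1] → ℝ be differentiable with ḡ(1) = 0, h̄_j(1) = 0 for all j, ḡ(0) ≥ g(𝒯(0)), and h̄_j(0) ≥ h_j(𝒯(0)) for all j. Let γ be an extended class-𝒦 function. If for every t ∈ [0,1] the guidance input satisfies ⟨∇g(𝒯(t)), v(t,𝒯(t)) + u(t)⟩ ≤ γ(ḡ(t) − g(𝒯(t))) + ḡ'(t) and ⟨∇h_j(𝒯(t)), v(t,𝒯(t)) + u(t)⟩ ≤ γ(h̄_j(t) − h_j(𝒯(t))) + h̄_j'(t) for every j, then the generated sample 𝒯(1) is certified: g_i(𝒯(1)) = 0 for all i = 1, …, N_g and h_j(𝒯(1)) ≤ 0 for all j = 1, …, N_h. -/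

import Mathlib

open Set Filter RealInnerProductSpace

/-- A function `γ : ℝ → ℝ` is an extended class-𝒦 function if it is continuous,
strictly increasing, and `γ 0 = 0`. -/
def IsExtendedClassK (γ : ℝ → ℝ) : Prop :=
  Continuous γ ∧ StrictMono γ ∧ γ 0 = 0

/-- Comparison lemma: if `φ' ≤ γ (B - φ) + B'` on `[0,1]` with `γ` strictly
monotone vanishing at `0`, and `φ 0 ≤ B 0`, then `φ 1 ≤ B 1`. -/
lemma le_bar_of_guidance {φ B φ' B' γ : ℝ → ℝ}
    (hmono : StrictMono γ) (hγ0 : γ 0 = 0)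
    (hφ : ∀ t ∈ Icc (0:ℝ) 1, HasDerivWithinAt φ (φ' t) (Icc 0 1) t)
    (hB : ∀ t ∈ Icc (0:ℝ) 1, HasDerivWithinAt B (B' t) (Icc 0 1) t)
    (h0 : φ 0 ≤ B 0)
    (hle : ∀ t ∈ Icc (0:ℝ) 1, φ' t ≤ γ (B t - φ t) + B' t) :
    φ 1 ≤ B 1 := by
  have key : ∀ ε > (0:ℝ), φ 1 ≤ B 1 + ε := by
    intro ε hε
    have h01 : (1:ℝ) ∈ Icc (0:ℝ) 1 := by norm_num
    refine image_le_of_deriv_right_lt_deriv_boundary' (f := φ) (f' := φ')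
      (B := fun t => B t + ε) (B' := B') (a := 0) (b := 1)
      (fun t ht => (hφ t ht).continuousWithinAt)
      (fun x hx => (hφ x (Ico_subset_Icc_self hx)).mono_of_mem_nhdsWithin
        (Icc_mem_nhdsGE_of_mem hx))
      (by show φ 0 ≤ B 0 + ε; linarith)
      (fun t ht => ((hB t ht).continuousWithinAt).add continuousWithinAt_const)
      (fun x hx => ((hB x (Ico_subset_Icc_self hx)).mono_of_mem_nhdsWithin
        (Icc_mem_nhdsGE_of_mem hx)).add_const ε)
      ?_ h01
    intro x hx hcontact
    have hmem := Ico_subset_Icc_self hx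
    have h1 : B x - φ x = -ε := by linarith
    have h2 := hle x hmem
    rw [h1] at h2
    have h3 : γ (-ε) < 0 := by
      have := hmono (show -ε < 0 by linarith)
      rwa [hγ0] at this
    linarith
  exact le_of_forall_pos_le_add key

/-- Theorem 3 (certified sample from the guided flow): if the guided flow
`traj' t = v t (traj t) + u t` satisfies the PTZF-shaped guidance inequalities
for the aggregated equality constraint `G = ∑ i (g i)²` and for each inequality
constraint `h j`, then the generated sample `traj 1` is certified:
`g i (traj 1) = 0` for all `i` and `h j (traj 1) ≤ 0` for all `j`. -/
theorem guided_flow_produces_certified_sample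
    {d Ng Nh : ℕ}
    (traj : ℝ → EuclideanSpace ℝ (Fin d))
    (v : ℝ → EuclideanSpace ℝ (Fin d) → EuclideanSpace ℝ (Fin d))
    (u : ℝ → EuclideanSpace ℝ (Fin d))
    (hflow : ∀ t ∈ Set.Icc (0:ℝ) 1,
      HasDerivWithinAt traj (v t (traj t) + u t) (Set.Icc 0 1) t)
    (g : Fin Ng → EuclideanSpace ℝ (Fin d) → ℝ) (hg : ∀ i, Differentiable ℝ (g i))
    (h : Fin Nh → EuclideanSpace ℝ (Fin d) → ℝ) (hh : ∀ j, Differentiable ℝ (h j))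
    (G : EuclideanSpace ℝ (Fin d) → ℝ) (hG : ∀ x, G x = ∑ i, (g i x) ^ 2)
    (gbar : ℝ → ℝ) (hbar : Fin Nh → ℝ → ℝ)
    (hgbardiff : DifferentiableOn ℝ gbar (Set.Icc 0 1))
    (hhbardiff : ∀ j, DifferentiableOn ℝ (hbar j) (Set.Icc 0 1))
    (hgbar1 : gbar 1 = 0) (hhbar1 : ∀ j, hbar j 1 = 0)
    (hgbar0 : G (traj 0) ≤ gbar 0) (hhbar0 : ∀ j, h j (traj 0) ≤ hbar j 0)
    (γ : ℝ → ℝ) (hγ : IsExtendedClassK γ)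
    (hguide_g : ∀ t ∈ Set.Icc (0:ℝ) 1,
      ⟪gradient G (traj t), v t (traj t) + u t⟫
        ≤ γ (gbar t - G (traj t)) + derivWithin gbar (Set.Icc 0 1) t)
    (hguide_h : ∀ j, ∀ t ∈ Set.Icc (0:ℝ) 1,
      ⟪gradient (h j) (traj t), v t (traj t) + u t⟫
        ≤ γ (hbar j t - h j (traj t)) + derivWithin (hbar j) (Set.Icc 0 1) t) :
    (∀ i, g i (traj 1) = 0) ∧ ∀ j, h j (traj 1) ≤ 0 := by
  obtain ⟨hγc, hγmono, hγ0⟩ := hγ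
  -- `G` is differentiable
  have hGeq : G = fun x => ∑ i, (g i x) ^ 2 := funext hG
  have hGdiff : Differentiable ℝ G := by
    rw [hGeq]
    exact Differentiable.fun_sum fun i _ => (hg i).pow 2
  -- generic chain rule: derivative of `f ∘ traj` along the flow
  have chain : ∀ (f : EuclideanSpace ℝ (Fin d) → ℝ), Differentiable ℝ f →
      ∀ t ∈ Icc (0:ℝ) 1, HasDerivWithinAt (fun s => f (traj s))
        ⟪gradient f (traj t), v t (traj t) + u t⟫ (Icc 0 1) t := by
    intro f hf t ht
    have hgrad := (hf (traj t)).hasGradientAt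
    have hfd := hgrad.hasFDerivAt
    have hc := hfd.comp_hasDerivWithinAt t (hflow t ht)
    simpa [Function.comp_def, InnerProductSpace.toDual_apply_apply] using hc
  -- equality constraints
  have hGle : G (traj 1) ≤ gbar 1 :=
    le_bar_of_guidance hγmono hγ0
      (chain G hGdiff)
      (fun t ht => (hgbardiff t ht).hasDerivWithinAt)
      hgbar0 hguide_g
  have hG1 : G (traj 1) ≤ 0 := by rwa [hgbar1] at hGle
  have hGnonneg : 0 ≤ G (traj 1) := by
    rw [hG]
    exact Finset.sum_nonneg fun i _ => sq_nonneg _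
  have hGzero : G (traj 1) = 0 := le_antisymm hG1 hGnonneg
  constructor
  · intro i
    have hsum : ∑ i, (g i (traj 1)) ^ 2 = 0 := by rw [← hG]; exact hGzero
    have := (Finset.sum_eq_zero_iff_of_nonneg
      (fun i _ => sq_nonneg (g i (traj 1)))).mp hsum i (Finset.mem_univ i)
    exact (pow_eq_zero_iff two_ne_zero).mp this
  · intro j
    have hle : h j (traj 1) ≤ hbar j 1 :=
      le_bar_of_guidance hγmono hγ0
        (chain (h j) (hh j))
        (fun t ht => (hhbardiff j t ht).hasDerivWithinAt)
        (hhbar0 j) (hguide_h j)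
    rwa [hhbar1 j] at hle
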